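/- Let S be a finite nonempty set of points in the plane, D a point and d a real number with 0 < d and d ≤ dist(p, D) for every p ∈ S. For p ∈ S let p' := p + (d / dist(p, D)) • (D − p); that is, p' is the point at distance d from p on the segment from p to D. Suppose c is a point and r a real number such that dist(p, c) ≤ r for all p ∈ S and dist(D, c) ≤ r. Then there exists a point c' such that dist(p', c') ≤ r − d/2 for every p ∈ S. (Moving all points of a set a common distance d towards a point D lying in an enclosing ball of radius r shrinks the enclosing radius by at least d/2.) -/
import Mathlib


/-- Moving every point of `S` a common distance `d` straight towards a point `D`
that lies in a closed ball of radius `r` containing `S` shrinks the enclosing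
radius by at least `d/2`. -/
theorem shrink_towards_point_in_ball
    (S : Finset (EuclideanSpace ℝ (Fin 2))) (hS : S.Nonempty)
    (D : EuclideanSpace ℝ (Fin 2)) (d : ℝ) (hd : 0 < d)
    (hdist : ∀ p ∈ S, d ≤ dist p D)
    (c : EuclideanSpace ℝ (Fin 2)) (r : ℝ)
    (hc : ∀ p ∈ S, dist p c ≤ r) (hD : dist D c ≤ r) :
    ∃ c' : EuclideanSpace ℝ (Fin 2),
      ∀ p ∈ S, dist (p + (d / dist p D) • (D - p)) c' ≤ r - d / 2 := by
  obtain ⟨p₀, hp₀⟩ := hS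
  have hr : 0 < r := by
    have h1 := hdist p₀ hp₀
    have h2 := hc p₀ hp₀
    have h3 := dist_triangle p₀ c D
    have h4 : dist c D = dist D c := dist_comm c D
    linarith
  set lam := d / (2 * r) with hlam
  have hlam0 : 0 < lam := div_pos hd (by linarith)
  refine ⟨c + lam • (D - c), ?_⟩
  intro p hp
  have hpD : (0:ℝ) < dist p D := lt_of_lt_of_le hd (hdist p hp)
  set t := d / dist p D with ht
  have hpD2r : dist p D ≤ 2 * r := by
    have h3 := dist_triangle p c D
    have h4 : dist c D = dist D c := dist_comm c D
    have := hlam -- dummy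
    linarith [hc p hp]
  have ht1 : t ≤ 1 := (div_le_one hpD).mpr (hdist p hp)
  have ht0 : 0 < t := div_pos hd hpD
  have hlam1 : lam ≤ 1 := by
    rw [hlam, div_le_one (by linarith)]
    linarith [hdist p hp]
  have htd : t * dist p D = d := div_mul_cancel₀ d (ne_of_gt hpD)
  have hlamd : lam * dist p D ≤ d := by
    have : lam * dist p D ≤ lam * (2 * r) := by
      exact mul_le_mul_of_nonneg_left hpD2r hlam0.le
    have h2 : lam * (2 * r) = d := by
      rw [hlam]; field_simp
    linarith
  have hpc : ‖p - c‖ ≤ r := by rw [← dist_eq_norm]; exact hc p hp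
  have hDc : ‖D - c‖ ≤ r := by rw [← dist_eq_norm]; exact hD
  have hpDn : ‖p - D‖ = dist p D := (dist_eq_norm p D).symm
  rw [dist_eq_norm]
  rcases le_or_gt lam t with hcase | hcase
  · have key : p + t • (D - p) - (c + lam • (D - c))
        = (1 - t) • (p - c) + (t - lam) • (D - c) := by module
    rw [key]
    calc ‖(1 - t) • (p - c) + (t - lam) • (D - c)‖
        ≤ ‖(1 - t) • (p - c)‖ + ‖(t - lam) • (D - c)‖ := norm_add_le _ _
      _ = (1 - t) * ‖p - c‖ + (t - lam) * ‖D - c‖ := by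
          rw [norm_smul, norm_smul, Real.norm_of_nonneg (by linarith),
            Real.norm_of_nonneg (by linarith)]
      _ ≤ (1 - t) * r + (t - lam) * r := by
          gcongr <;> linarith
      _ = (1 - lam) * r := by ring
      _ ≤ r - d / 2 := by
          have : lam * (2 * r) = d := by rw [hlam]; field_simp
          nlinarith
  · have key : p + t • (D - p) - (c + lam • (D - c))
        = (1 - lam) • (p - c) + (lam - t) • (p - D) := by module
    rw [key]
    calc ‖(1 - lam) • (p - c) + (lam - t) • (p - D)‖
        ≤ ‖(1 - lam) • (p - c)‖ + ‖(lam - t) • (p - D)‖ := norm_add_le _ _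
      _ = (1 - lam) * ‖p - c‖ + (lam - t) * ‖p - D‖ := by
          rw [norm_smul, norm_smul, Real.norm_of_nonneg (by linarith),
            Real.norm_of_nonneg (by linarith)]
      _ ≤ (1 - lam) * r + 0 := by
          have h1 : (1 - lam) * ‖p - c‖ ≤ (1 - lam) * r :=
            mul_le_mul_of_nonneg_left hpc (by linarith)
          have h2 : (lam - t) * ‖p - D‖ ≤ 0 := by rw [hpDn]; nlinarith
          linarith
      _ ≤ r - d / 2 := by
          have : lam * (2 * r) = d := by rw [hlam]; field_simp
          nlinarith
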